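/- Fix ε ∈ (0,1) and define σ : ℝ₊ → ℝ₊ by σ(s) = ℓ for s ∈ [ℓ, ℓ+ε] for every nonnegative integer ℓ, extended affinely on each interval [ℓ+ε, ℓ+1] (so σ(ℓ+ε+u) = ℓ + u/(1-ε) for u ∈ [0, 1-ε]). Then σ is superadditive: σ(a + b) ≥ σ(a) + σ(b) for all a, b ≥ 0. -/

import Mathlib

/-- The truncation function `σ`: equal to `ℓ` on `[ℓ, ℓ+ε]` for every `ℓ ∈ ℤ₊`,
extended affinely (with slope `1/(1-ε)`) on `[ℓ+ε, ℓ+1]`. -/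
noncomputable def truncFn (ε s : ℝ) : ℝ :=
  ⌊s⌋ + max 0 (s - ⌊s⌋ - ε) / (1 - ε)

lemma truncFn_add_int (ε s : ℝ) (k : ℤ) : truncFn ε (s + k) = truncFn ε s + k := by
  unfold truncFn
  rw [Int.floor_add_intCast]
  push_cast
  ring_nf

lemma aux_div (ε A B C c : ℝ) (h1 : (0:ℝ) < 1 - ε)
    (h : A + B ≤ c * (1 - ε) + C) :
    A / (1 - ε) + B / (1 - ε) ≤ c + C / (1 - ε) := by
  rw [← add_div]
  have h2 : c + C / (1 - ε) = (c * (1 - ε) + C) / (1 - ε) := by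
    field_simp
  rw [h2]
  exact (div_le_div_iff_of_pos_right h1).mpr h

lemma key (ε : ℝ) (hε0 : 0 < ε) (hε1 : ε < 1) (x y : ℝ)
    (hx0 : 0 ≤ x) (hx1 : x < 1) (hy0 : 0 ≤ y) (hy1 : y < 1) :
    max 0 (x - ε) / (1 - ε) + max 0 (y - ε) / (1 - ε) ≤ truncFn ε (x + y) := by
  have h1 : (0:ℝ) < 1 - ε := by linarith
  unfold truncFn
  rcases lt_or_ge (x + y) 1 with hxy | hxy
  · have hfl : ⌊x + y⌋ = 0 := by
      rw [Int.floor_eq_zero_iff]; exact Set.mem_Ico.2 ⟨by linarith, by linarith⟩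
    rw [hfl]
    push_cast
    apply aux_div _ _ _ _ _ h1
    rcases max_cases (0:ℝ) (x - ε) with ⟨h2, h3⟩ | ⟨h2, h3⟩ <;>
      rcases max_cases (0:ℝ) (y - ε) with ⟨h4, h5⟩ | ⟨h4, h5⟩ <;>
      rcases max_cases (0:ℝ) (x + y - 0 - ε) with ⟨h6, h7⟩ | ⟨h6, h7⟩ <;>
      rw [h2, h4, h6] <;> nlinarith
  · have hfl : ⌊x + y⌋ = 1 := by
      rw [Int.floor_eq_iff]
      push_cast; constructor <;> linarith
    rw [hfl]
    push_cast
    apply aux_div _ _ _ _ _ h1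
    rcases max_cases (0:ℝ) (x - ε) with ⟨h2, h3⟩ | ⟨h2, h3⟩ <;>
      rcases max_cases (0:ℝ) (y - ε) with ⟨h4, h5⟩ | ⟨h4, h5⟩ <;>
      rcases max_cases (0:ℝ) (x + y - 1 - ε) with ⟨h6, h7⟩ | ⟨h6, h7⟩ <;>
      rw [h2, h4, h6] <;> nlinarith

/-- `σ` is superadditive on the nonnegative reals. -/
theorem stmt_3 (ε : ℝ) (hε : ε ∈ Set.Ioo (0 : ℝ) 1) (a b : ℝ) (ha : 0 ≤ a) (hb : 0 ≤ b) :
    truncFn ε a + truncFn ε b ≤ truncFn ε (a + b) := by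
  obtain ⟨hε0, hε1⟩ := hε
  set x := Int.fract a with hx
  set y := Int.fract b with hy
  have hax : a = x + ⌊a⌋ := by rw [hx]; rw [Int.fract]; ring
  have hby : b = y + ⌊b⌋ := by rw [hy]; rw [Int.fract]; ring
  have hab : a + b = (x + y) + ((⌊a⌋ + ⌊b⌋ : ℤ) : ℝ) := by push_cast; linarith
  have ha' : truncFn ε a = truncFn ε x + ⌊a⌋ := by
    conv_lhs => rw [hax]
    exact truncFn_add_int ε x ⌊a⌋
  have hb' : truncFn ε b = truncFn ε y + ⌊b⌋ := by
    conv_lhs => rw [hby]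
    exact truncFn_add_int ε y ⌊b⌋
  rw [hab, truncFn_add_int, ha', hb']
  push_cast
  have hxfl : ⌊x⌋ = 0 := by
    rw [Int.floor_eq_zero_iff]
    exact ⟨Int.fract_nonneg a, Int.fract_lt_one a⟩
  have hyfl : ⌊y⌋ = 0 := by
    rw [Int.floor_eq_zero_iff]
    exact ⟨Int.fract_nonneg b, Int.fract_lt_one b⟩
  have hk := key ε hε0 hε1 x y (Int.fract_nonneg a) (Int.fract_lt_one a)
    (Int.fract_nonneg b) (Int.fract_lt_one b)
  have hx' : truncFn ε x = max 0 (x - ε) / (1 - ε) := by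
    unfold truncFn; rw [hxfl]; push_cast; ring_nf
  have hy' : truncFn ε y = max 0 (y - ε) / (1 - ε) := by
    unfold truncFn; rw [hyfl]; push_cast; ring_nf
  rw [hx', hy'] at *
  linarith
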